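/- Let f = Σ_{i+j≤4} a_{ij} x^i y^j ∈ ℂ[x,y] be a polynomial of total degree at most 4, defining a plane quartic X through the origin, the node of the nodal cubic E : y² − x² − x³ = 0. Suppose that X meets the branch of E tangent to the line x = y with multiplicity at least 3, i.e. dim_ℂ ℂ[[s]]/(f(s(s+2), s(s+1)(s+2))) ≥ 3, and that X meets the line x = y at the origin with multiplicity at least 3 (the condition that the origin be a flex of X with flex line x = y), i.e. dim_ℂ ℂ[[x,y]]/(f, x − y) ≥ 3. Then X is singular at the origin: f ∈ (x,y)², equivalently a₀₀ = a₁₀ = a₀₁ = 0. (Equivalently: a plane quartic that is smooth at the node of E and meets E there with intersection multiplicity at least 4 cannot have the node as a flex.) -/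

import Mathlib

set_option synthInstance.maxHeartbeats 1000000
set_option maxHeartbeats 1000000

/-- The coefficient `a_{ij}` of `x^i y^j` in a polynomial `f ∈ ℂ[x,y]`. -/
noncomputable def coeffA (f : MvPolynomial (Fin 2) ℂ) (i j : ℕ) : ℂ :=
  MvPolynomial.coeff (Finsupp.single 0 i + Finsupp.single 1 j) f


lemma rank_quot_le {R : Type} [CommRing R] [Algebra ℂ R] (I : Ideal R) (n : ℕ) (v : Fin n → R)
    (h : ∀ p : R, ∃ c : Fin n → ℂ, p - ∑ i, c i • v i ∈ I) :
    Module.rank ℂ (R ⧸ I) ≤ n := by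
  have hs : Submodule.span ℂ (Set.range fun i : Fin n => Ideal.Quotient.mkₐ ℂ I (v i)) = ⊤ := by
    rw [Submodule.eq_top_iff']
    intro x
    obtain ⟨p, rfl⟩ := Ideal.Quotient.mkₐ_surjective ℂ I x
    obtain ⟨c, hc⟩ := h p
    have h0 : Ideal.Quotient.mkₐ ℂ I (p - ∑ i, c i • v i) = 0 := by
      rw [Ideal.Quotient.mkₐ_eq_mk, Ideal.Quotient.eq_zero_iff_mem]; exact hc
    rw [map_sub, sub_eq_zero] at h0
    rw [h0, map_sum]
    refine Submodule.sum_mem _ fun i _ => ?_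
    rw [map_smul]
    exact Submodule.smul_mem _ _ (Submodule.subset_span ⟨i, rfl⟩)
  have hr : Module.rank ℂ (R ⧸ I)
      ≤ Cardinal.mk ↑(Set.range fun i : Fin n => Ideal.Quotient.mkₐ ℂ I (v i)) := by
    rw [← rank_top ℂ, ← hs]; exact rank_span_le _
  have h2 : Cardinal.mk ↑(Set.range fun i : Fin n => Ideal.Quotient.mkₐ ℂ I (v i))
      ≤ (n : Cardinal) := Cardinal.mk_range_le.trans (Cardinal.mk_fin n).le
  exact hr.trans h2

open PowerSeries in
lemma one_var_lemma (g : PowerSeries ℂ)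
    (h : 3 ≤ Module.rank ℂ (PowerSeries ℂ ⧸ Ideal.span {g})) :
    ∀ k < 3, PowerSeries.coeff k g = 0 := by
  by_contra hcon
  push_neg at hcon
  obtain ⟨k, hk3, hk⟩ := hcon
  have hord : g.order < ⊤ := lt_of_le_of_lt (order_le k hk) (by exact_mod_cast lt_top_iff_ne_top.mpr (by simp))
  obtain ⟨n, hn⟩ : ∃ n : ℕ, g.order.lift hord = n := ⟨_, rfl⟩
  have hnk : n ≤ k := by
    have h1 := order_le k hk
    have h2 : g.order = (n : ℕ∞) := by rw [← hn]; simp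
    rw [h2] at h1
    exact_mod_cast h1
  have hn' : g.order.toNat = n := by rw [← ENat.lift_eq_toNat_of_lt_top hord]; exact hn
  obtain ⟨w, hw⟩ := X_pow_order_dvd (φ := g)
  rw [hn'] at hw
  have hco := coeff_order (φ := g) (by rintro rfl; simp at hord)
  rw [hn'] at hco
  rw [hw] at hco
  have hwunit : IsUnit w := by
    rw [isUnit_iff_constantCoeff]
    have hxw := coeff_X_pow_mul w n 0
    rw [zero_add] at hxw
    rw [hxw] at hco
    simpa [coeff_zero_eq_constantCoeff] using hco
  have hdvd : g ∣ (X : PowerSeries ℂ) ^ n := by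
    obtain ⟨u, hu⟩ := hwunit
    refine ⟨(u⁻¹ : _), ?_⟩
    rw [hw, mul_assoc, ← hu, Units.mul_inv, mul_one]
  have hle : Module.rank ℂ (PowerSeries ℂ ⧸ Ideal.span {g}) ≤ n := by
    apply rank_quot_le _ _ (fun i : Fin n => X ^ (i : ℕ))
    intro p
    refine ⟨fun i => coeff (i : ℕ) p, ?_⟩
    rw [Ideal.mem_span_singleton]
    refine hdvd.trans (X_pow_dvd_iff.mpr fun m hm => ?_)
    rw [map_sub, map_sum]
    rw [Finset.sum_eq_single (⟨m, hm⟩ : Fin n)]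
    · simp [coeff_X_pow]
    · intro b _ hb
      simp only [LinearMap.map_smul_of_tower, coeff_X_pow]
      rw [if_neg, smul_zero]
      intro hmb; apply hb; ext; simp [hmb]
    · intro hmem; exact absurd (Finset.mem_univ _) hmem
  have h3 : (3 : Cardinal) ≤ (n : Cardinal) := h.trans hle
  have : (3 : ℕ) ≤ n := by exact_mod_cast h3
  omega


lemma canon_eq_iff (i j a b : ℕ) :
    (Finsupp.single 0 i + Finsupp.single 1 j : Fin 2 →₀ ℕ)
      = Finsupp.single 0 a + Finsupp.single 1 b ↔ i = a ∧ j = b := by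
  constructor
  · intro h
    constructor
    · have := DFunLike.congr_fun h 0; simpa [Finsupp.single_apply] using this
    · have := DFunLike.congr_fun h 1; simpa [Finsupp.single_apply] using this
  · rintro ⟨rfl, rfl⟩; rfl

section DivisionPart

open MvPowerSeries Finsupp

/-- auxiliary quotient in division by X 0 - X 1 -/
noncomputable def qAux (p : MvPowerSeries (Fin 2) ℂ) : MvPowerSeries (Fin 2) ℂ :=
  fun d => -(∑ a ∈ Finset.range (d 0 + 1),
    p (Finsupp.single 0 a + Finsupp.single 1 (d 0 + d 1 + 1 - a)))

/-- the diagonal part -/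
noncomputable def diagAux (p : MvPowerSeries (Fin 2) ℂ) : MvPowerSeries (Fin 2) ℂ :=
  fun d => if d 1 = 0 then
    ∑ a ∈ Finset.range (d 0 + 1), p (Finsupp.single 0 a + Finsupp.single 1 (d 0 - a))
  else 0

lemma canon (d : Fin 2 →₀ ℕ) : ∃ i j, d = Finsupp.single 0 i + Finsupp.single 1 j :=
  ⟨d 0, d 1, by ext t; fin_cases t <;> simp [Finsupp.single_apply]⟩

lemma div_lemma (p : MvPowerSeries (Fin 2) ℂ) :
    p = diagAux p + (X 0 - X 1) * qAux p := by
  ext d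
  obtain ⟨i, j, rfl⟩ := canon d
  have e0 : (Finsupp.single 0 i + Finsupp.single 1 j : Fin 2 →₀ ℕ) 0 = i := by
    simp [Finsupp.single_apply]
  have e1 : (Finsupp.single 0 i + Finsupp.single 1 j : Fin 2 →₀ ℕ) 1 = j := by
    simp [Finsupp.single_apply]
  have hX : ∀ s : Fin 2, (X s : MvPowerSeries (Fin 2) ℂ) = monomial (Finsupp.single s 1) 1 := fun s => rfl
  rw [map_add, sub_mul, map_sub, hX 0, hX 1, coeff_monomial_mul, coeff_monomial_mul]
  simp only [Finsupp.single_le_iff, e0, e1]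
  have hdiag : coeff (Finsupp.single 0 i + Finsupp.single 1 j) (diagAux p)
      = if j = 0 then ∑ a ∈ Finset.range (i + 1),
          p (Finsupp.single 0 a + Finsupp.single 1 (i - a)) else 0 := by
    rw [coeff_apply]; unfold diagAux; rw [e0, e1]
  rw [coeff_apply, hdiag]
  rcases Nat.eq_zero_or_pos i with hi | hi <;> rcases Nat.eq_zero_or_pos j with hj | hj
  · subst hi; subst hj
    simp
  · subst hi
    have hsub : (Finsupp.single (0:Fin 2) 0 + Finsupp.single 1 j) - Finsupp.single 1 1
        = Finsupp.single (0:Fin 2) 0 + Finsupp.single 1 (j-1) := by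
      ext t; fin_cases t <;> simp [Finsupp.tsub_apply, Finsupp.single_apply]
    rw [if_neg (by omega), if_neg (by omega), if_pos (by omega), hsub]
    rw [coeff_apply]
    unfold qAux
    have q0 : ((Finsupp.single (0:Fin 2) 0 + Finsupp.single 1 (j-1) : Fin 2 →₀ ℕ)) 0 = 0 := by
      simp [Finsupp.single_apply]
    have q1 : ((Finsupp.single (0:Fin 2) 0 + Finsupp.single 1 (j-1) : Fin 2 →₀ ℕ)) 1 = j - 1 := by
      simp [Finsupp.single_apply]
    rw [q0, q1]
    simp only [Finset.range_one, Finset.sum_singleton, zero_add]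
    rw [show j - 1 + 1 - 0 = j by omega]
    ring
  · subst hj
    have hsub : (Finsupp.single (0:Fin 2) i + Finsupp.single 1 0) - Finsupp.single 0 1
        = Finsupp.single (0:Fin 2) (i-1) + Finsupp.single 1 0 := by
      ext t; fin_cases t <;> simp [Finsupp.tsub_apply, Finsupp.single_apply]
    rw [if_pos rfl, if_pos (by omega), if_neg (by omega), hsub]
    rw [coeff_apply]
    unfold qAux
    have q0 : ((Finsupp.single (0:Fin 2) (i-1) + Finsupp.single 1 0 : Fin 2 →₀ ℕ)) 0 = i - 1 := by
      simp [Finsupp.single_apply]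
    have q1 : ((Finsupp.single (0:Fin 2) (i-1) + Finsupp.single 1 0 : Fin 2 →₀ ℕ)) 1 = 0 := by
      simp [Finsupp.single_apply]
    rw [q0, q1]
    simp only [show i - 1 + 0 + 1 = i from by omega, show i - 1 + 1 = i from by omega]
    rw [Finset.sum_range_succ]
    simp only [show i - i = 0 from by omega]
    ring
  · have hsub0 : (Finsupp.single (0:Fin 2) i + Finsupp.single 1 j) - Finsupp.single 0 1
        = Finsupp.single (0:Fin 2) (i-1) + Finsupp.single 1 j := by
      ext t; fin_cases t <;> simp [Finsupp.tsub_apply, Finsupp.single_apply]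
    have hsub1 : (Finsupp.single (0:Fin 2) i + Finsupp.single 1 j) - Finsupp.single 1 1
        = Finsupp.single (0:Fin 2) i + Finsupp.single 1 (j-1) := by
      ext t; fin_cases t <;> simp [Finsupp.tsub_apply, Finsupp.single_apply]
    rw [if_neg (by omega), if_pos (by omega), if_pos (by omega), hsub0, hsub1]
    rw [coeff_apply, coeff_apply]
    unfold qAux
    have q00 : ((Finsupp.single (0:Fin 2) (i-1) + Finsupp.single 1 j : Fin 2 →₀ ℕ)) 0 = i - 1 := by
      simp [Finsupp.single_apply]
    have q01 : ((Finsupp.single (0:Fin 2) (i-1) + Finsupp.single 1 j : Fin 2 →₀ ℕ)) 1 = j := by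
      simp [Finsupp.single_apply]
    have q10 : ((Finsupp.single (0:Fin 2) i + Finsupp.single 1 (j-1) : Fin 2 →₀ ℕ)) 0 = i := by
      simp [Finsupp.single_apply]
    have q11 : ((Finsupp.single (0:Fin 2) i + Finsupp.single 1 (j-1) : Fin 2 →₀ ℕ)) 1 = j - 1 := by
      simp [Finsupp.single_apply]
    rw [q00, q01, q10, q11]
    simp only [show i - 1 + j + 1 = i + j from by omega,
      show i + (j - 1) + 1 = i + j from by omega, show i - 1 + 1 = i from by omega]
    rw [Finset.sum_range_succ]
    simp only [show i + j - i = j from by omega]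
    ring


noncomputable def dsum (p : MvPowerSeries (Fin 2) ℂ) (k : ℕ) : ℂ :=
  ∑ a ∈ Finset.range (k + 1), p (Finsupp.single 0 a + Finsupp.single 1 (k - a))

lemma coeff_diagAux (p : MvPowerSeries (Fin 2) ℂ) (i j : ℕ) :
    coeff (Finsupp.single 0 i + Finsupp.single 1 j) (diagAux p)
      = if j = 0 then dsum p i else 0 := by
  have e0 : (Finsupp.single 0 i + Finsupp.single 1 j : Fin 2 →₀ ℕ) 0 = i := by
    simp [Finsupp.single_apply]
  have e1 : (Finsupp.single 0 i + Finsupp.single 1 j : Fin 2 →₀ ℕ) 1 = j := by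
    simp [Finsupp.single_apply]
  rw [coeff_apply]; unfold diagAux; rw [e0, e1]; rfl

lemma flex_lemma (F : MvPowerSeries (Fin 2) ℂ)
    (h0 : dsum F 0 = 0) (h1 : dsum F 1 = 0)
    (h : 3 ≤ Module.rank ℂ (MvPowerSeries (Fin 2) ℂ ⧸ Ideal.span {F, X 0 - X 1})) :
    dsum F 2 = 0 := by
  by_contra hc
  set J : Ideal (MvPowerSeries (Fin 2) ℂ) := Ideal.span {F, X 0 - X 1} with hJ
  have hF : F ∈ J := Ideal.subset_span (by simp)
  have hXY : X 0 - X 1 ∈ J := Ideal.subset_span (by simp)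
  have hdiagJ : diagAux F ∈ J := by
    have hd := div_lemma F
    have h2 : diagAux F = F - (X 0 - X 1) * qAux F := by
      conv_lhs => rw [show diagAux F = (diagAux F + (X 0 - X 1) * qAux F) - (X 0 - X 1) * qAux F by ring, ← hd]
    rw [h2]
    exact Ideal.sub_mem _ hF (Ideal.mul_mem_right _ _ hXY)
  have hdvd : (X 0 : MvPowerSeries (Fin 2) ℂ) ^ 3 ∣ diagAux F - dsum F 2 • X 0 ^ 2 := by
    rw [X_pow_dvd_iff]
    intro m hm
    obtain ⟨i, j, rfl⟩ := canon m
    have e0 : (Finsupp.single 0 i + Finsupp.single 1 j : Fin 2 →₀ ℕ) 0 = i := by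
      simp [Finsupp.single_apply]
    rw [e0] at hm
    rw [map_sub, coeff_diagAux, coeff_smul, coeff_X_pow]
    have hcond : ((Finsupp.single 0 i + Finsupp.single 1 j : Fin 2 →₀ ℕ)
        = Finsupp.single 0 2) ↔ (i = 2 ∧ j = 0) := by
      rw [show (Finsupp.single (0:Fin 2) 2 : Fin 2 →₀ ℕ)
        = Finsupp.single 0 2 + Finsupp.single 1 0 by simp]
      exact canon_eq_iff i j 2 0
    simp only [hcond]
    rcases eq_or_ne j 0 with hj | hj
    · subst hj
      interval_cases i
      · simp [h0]
      · simp [h1]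
      · simp
    · simp [hj]
  obtain ⟨u, hu⟩ := hdvd
  have hkey : (X 0 : MvPowerSeries (Fin 2) ℂ) ^ 2 * (C (dsum F 2) + X 0 * u)
      = diagAux F := by
    have h3 : diagAux F = dsum F 2 • X 0 ^ 2 + X 0 ^ 3 * u := by rw [← hu]; ring
    rw [h3, smul_eq_C_mul]; ring
  have hunit : IsUnit (C (dsum F 2) + X 0 * u) := by
    rw [MvPowerSeries.isUnit_iff_constantCoeff]
    have : constantCoeff (C (dsum F 2) + X 0 * u) = dsum F 2 := by
      simp
    rw [this]
    exact Ne.isUnit hc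
  obtain ⟨w, hw⟩ := hunit
  have hX2 : (X 0 : MvPowerSeries (Fin 2) ℂ) ^ 2 ∈ J := by
    have h4 : (X 0 : MvPowerSeries (Fin 2) ℂ) ^ 2 = diagAux F * ↑w⁻¹ := by
      calc (X 0 : MvPowerSeries (Fin 2) ℂ) ^ 2
          = X 0 ^ 2 * (↑w * ↑w⁻¹) := by rw [Units.mul_inv, mul_one]
        _ = (X 0 ^ 2 * (C (dsum F 2) + X 0 * u)) * ↑w⁻¹ := by rw [hw]; ring
        _ = diagAux F * ↑w⁻¹ := by rw [hkey]
    rw [h4]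
    exact Ideal.mul_mem_right _ _ hdiagJ
  have hle : Module.rank ℂ (MvPowerSeries (Fin 2) ℂ ⧸ J) ≤ 2 := by
    apply rank_quot_le J 2 ![1, X 0]
    intro p
    refine ⟨![dsum p 0, dsum p 1], ?_⟩
    have hsum : (∑ i, (![dsum p 0, dsum p 1]) i • (![1, X 0] : Fin 2 → MvPowerSeries (Fin 2) ℂ) i)
        = dsum p 0 • (1 : MvPowerSeries (Fin 2) ℂ) + dsum p 1 • X 0 := by
      simp [Fin.sum_univ_two]
    rw [hsum]
    have hp := div_lemma p
    have hsplit : ∀ a b : ℂ, p - (a • (1 : MvPowerSeries (Fin 2) ℂ) + b • X 0)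
        = (diagAux p - (a • (1 : MvPowerSeries (Fin 2) ℂ) + b • X 0))
          + (X 0 - X 1) * qAux p := by
      intro a b
      conv_lhs => rw [hp]
      ring
    rw [hsplit]
    refine Ideal.add_mem _ ?_ (Ideal.mul_mem_right _ _ hXY)
    have hdvd2 : (X 0 : MvPowerSeries (Fin 2) ℂ) ^ 2
        ∣ diagAux p - (dsum p 0 • (1 : MvPowerSeries (Fin 2) ℂ) + dsum p 1 • X 0) := by
      rw [X_pow_dvd_iff]
      intro m hm
      obtain ⟨i, j, rfl⟩ := canon m
      have e0 : (Finsupp.single 0 i + Finsupp.single 1 j : Fin 2 →₀ ℕ) 0 = i := by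
        simp [Finsupp.single_apply]
      rw [e0] at hm
      rw [map_sub, coeff_diagAux, map_add, coeff_smul, coeff_smul, coeff_one, coeff_X]
      have h00 : ((Finsupp.single 0 i + Finsupp.single 1 j : Fin 2 →₀ ℕ) = 0)
          ↔ (i = 0 ∧ j = 0) := by
        rw [show (0 : Fin 2 →₀ ℕ) = Finsupp.single 0 0 + Finsupp.single 1 0 by simp]
        exact canon_eq_iff i j 0 0
      have h01 : ((Finsupp.single 0 i + Finsupp.single 1 j : Fin 2 →₀ ℕ)
          = Finsupp.single 0 1) ↔ (i = 1 ∧ j = 0) := by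
        rw [show (Finsupp.single (0:Fin 2) 1 : Fin 2 →₀ ℕ)
          = Finsupp.single 0 1 + Finsupp.single 1 0 by simp]
        exact canon_eq_iff i j 1 0
      simp only [h00, h01]
      rcases eq_or_ne j 0 with hj | hj
      · subst hj
        interval_cases i
        · simp
        · simp
      · simp [hj]
    obtain ⟨w2, hw2⟩ := hdvd2
    rw [hw2]
    exact Ideal.mul_mem_right _ _ hX2
  have h3 : (3 : Cardinal) ≤ 2 := h.trans hle
  norm_num at h3


end DivisionPart

lemma coeffA_monomial (i j a' b' : ℕ) (a : ℂ) :
    coeffA (MvPolynomial.monomial (Finsupp.single 0 i + Finsupp.single 1 j) a) a' b'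
      = if i = a' ∧ j = b' then a else 0 := by
  unfold coeffA
  rw [MvPolynomial.coeff_monomial]
  simp only [canon_eq_iff]

open PowerSeries in
lemma branch_coeff (f : MvPolynomial (Fin 2) ℂ) :
    (coeff 0) (MvPolynomial.aeval
        ![(X * (X + 2) : PowerSeries ℂ), (X * (X + 1) * (X + 2) : PowerSeries ℂ)] f)
      = coeffA f 0 0 ∧
    (coeff 1) (MvPolynomial.aeval
        ![(X * (X + 2) : PowerSeries ℂ), (X * (X + 1) * (X + 2) : PowerSeries ℂ)] f)
      = 2 * coeffA f 1 0 + 2 * coeffA f 0 1 ∧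
    (coeff 2) (MvPolynomial.aeval
        ![(X * (X + 2) : PowerSeries ℂ), (X * (X + 1) * (X + 2) : PowerSeries ℂ)] f)
      = coeffA f 1 0 + 3 * coeffA f 0 1
          + 4 * coeffA f 2 0 + 4 * coeffA f 1 1 + 4 * coeffA f 0 2 := by
  induction f using MvPolynomial.induction_on' with
  | add p q hp hq =>
    obtain ⟨hp0, hp1, hp2⟩ := hp
    obtain ⟨hq0, hq1, hq2⟩ := hq
    refine ⟨?_, ?_, ?_⟩
    · rw [map_add, map_add, hp0, hq0]; simp only [coeffA, MvPolynomial.coeff_add]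
    · rw [map_add, map_add, hp1, hq1]; simp only [coeffA, MvPolynomial.coeff_add]; ring
    · rw [map_add, map_add, hp2, hq2]; simp only [coeffA, MvPolynomial.coeff_add]; ring
  | monomial d a =>
    obtain ⟨i, j, rfl⟩ := canon d
    set u : PowerSeries ℂ := X * (X + 2) with hu
    set v : PowerSeries ℂ := X * (X + 1) * (X + 2) with hv
    have hG : ∀ k : ℕ, (coeff k) (MvPolynomial.aeval ![u, v]
        (MvPolynomial.monomial (Finsupp.single 0 i + Finsupp.single 1 j) a))
        = a * (coeff k) (u ^ i * v ^ j) := by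
      intro k
      rw [MvPolynomial.aeval_monomial]
      rw [Finsupp.prod_fintype _ _ (fun s => pow_zero _)]
      rw [Fin.prod_univ_two]
      have e0 : (Finsupp.single 0 i + Finsupp.single 1 j : Fin 2 →₀ ℕ) 0 = i := by
        simp [Finsupp.single_apply]
      have e1 : (Finsupp.single 0 i + Finsupp.single 1 j : Fin 2 →₀ ℕ) 1 = j := by
        simp [Finsupp.single_apply]
      rw [e0, e1]
      simp only [Matrix.cons_val_zero, Matrix.cons_val_one, Matrix.head_cons]
      rw [PowerSeries.algebraMap_apply, Algebra.algebraMap_self_apply, coeff_C_mul]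
    by_cases h3 : 3 ≤ i + j
    · have hXdvd : (X : PowerSeries ℂ) ^ 3 ∣ u ^ i * v ^ j := by
        refine dvd_trans (pow_dvd_pow X h3) ?_
        rw [pow_add]
        exact mul_dvd_mul (pow_dvd_pow_of_dvd (dvd_mul_right X (X + 2)) i)
          (pow_dvd_pow_of_dvd (by rw [hv, mul_assoc]; exact dvd_mul_right X _) j)
      have hz : ∀ k < 3, (coeff k) (u ^ i * v ^ j) = 0 :=
        fun k hk => PowerSeries.X_pow_dvd_iff.mp hXdvd k hk
      refine ⟨?_, ?_, ?_⟩ <;>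
        rw [hG] <;>
        simp only [coeffA_monomial] <;>
        rw [hz _ (by omega)] <;>
        repeat' rw [if_neg (by omega)]
      all_goals ring
    · push_neg at h3
      have hi2 : i ≤ 2 := by omega
      have hj2 : j ≤ 2 := by omega
      interval_cases i <;> interval_cases j <;> try exact absurd h3 (by omega)
      · refine ⟨?_, ?_, ?_⟩ <;>
          rw [hG, show u ^ 0 * v ^ 0 = (1 : PowerSeries ℂ) by ring] <;>
          simp only [coeffA_monomial] <;> norm_num
      · refine ⟨?_, ?_, ?_⟩ <;>
          rw [hG, show u ^ 0 * v ^ 1 = X^3 + C 3 * X^2 + C 2 * X by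
            rw [hv]; simp only [map_ofNat]; ring] <;>
          simp only [coeffA_monomial] <;> simp [coeff_X_pow] <;> ring
      · refine ⟨?_, ?_, ?_⟩ <;>
          rw [hG, show u ^ 0 * v ^ 2 = X^6 + C 6*X^5 + C 13*X^4 + C 12*X^3 + C 4*X^2 by
            rw [hv]; simp only [map_ofNat]; ring] <;>
          simp only [coeffA_monomial] <;> simp [coeff_X_pow] <;> ring
      · refine ⟨?_, ?_, ?_⟩ <;>
          rw [hG, show u ^ 1 * v ^ 0 = X^2 + C 2 * X by
            rw [hu]; simp only [map_ofNat]; ring] <;>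
          simp only [coeffA_monomial] <;> simp [coeff_X_pow] <;> ring
      · refine ⟨?_, ?_, ?_⟩ <;>
          rw [hG, show u ^ 1 * v ^ 1 = X^5 + C 5*X^4 + C 8*X^3 + C 4*X^2 by
            rw [hu, hv]; simp only [map_ofNat]; ring] <;>
          simp only [coeffA_monomial] <;> simp [coeff_X_pow] <;> ring
      · refine ⟨?_, ?_, ?_⟩ <;>
          rw [hG, show u ^ 2 * v ^ 0 = X^4 + C 4*X^3 + C 4*X^2 by
            rw [hu]; simp only [map_ofNat]; ring] <;>
          simp only [coeffA_monomial] <;> simp [coeff_X_pow] <;> ring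



/-- Let `f = Σ_{i+j≤4} a_{ij} x^i y^j ∈ ℂ[x,y]` have total degree at
most `4`, defining a plane quartic `X` through the origin, the node of the nodal cubic
`E : y² − x² − x³ = 0`.  If `X` meets the branch of `E` tangent to the line `x = y`
with multiplicity at least `3`, i.e.
`dim_ℂ ℂ[[s]]/(f(s(s+2), s(s+1)(s+2))) ≥ 3`, and `X` meets the line `x = y` at the
origin with multiplicity at least `3`, i.e. `dim_ℂ ℂ[[x,y]]/(f, x − y) ≥ 3`, then `X`
is singular at the origin: `a₀₀ = a₁₀ = a₀₁ = 0` (equivalently `f ∈ (x,y)²`). -/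
theorem quartic_with_nodal_flex_contact_is_singular_at_node
    (f : MvPolynomial (Fin 2) ℂ) (hdeg : f.totalDegree ≤ 4)
    (hbranch : 3 ≤ Module.rank ℂ
      (PowerSeries ℂ ⧸ Ideal.span
        {MvPolynomial.aeval
          ![(PowerSeries.X * (PowerSeries.X + 2) : PowerSeries ℂ),
            (PowerSeries.X * (PowerSeries.X + 1) * (PowerSeries.X + 2) : PowerSeries ℂ)] f}))
    (hflex : 3 ≤ Module.rank ℂ
      (MvPowerSeries (Fin 2) ℂ ⧸
        Ideal.span {(f : MvPowerSeries (Fin 2) ℂ),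
          (MvPowerSeries.X 0 : MvPowerSeries (Fin 2) ℂ) - MvPowerSeries.X 1})) :
    coeffA f 0 0 = 0 ∧ coeffA f 1 0 = 0 ∧ coeffA f 0 1 = 0 := by
  clear hdeg
  obtain ⟨hb0, hb1, hb2⟩ := branch_coeff f
  have hz := one_var_lemma _ hbranch
  rw [hz 0 (by omega)] at hb0
  rw [hz 1 (by omega)] at hb1
  rw [hz 2 (by omega)] at hb2
  -- dsum facts for the coerced polynomial
  have hFd : ∀ d : Fin 2 →₀ ℕ, (f : MvPowerSeries (Fin 2) ℂ) d = MvPolynomial.coeff d f := by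
    intro d
    exact MvPolynomial.coeff_coe f d
  have hd0 : dsum (f : MvPowerSeries (Fin 2) ℂ) 0 = coeffA f 0 0 := by
    unfold dsum
    rw [Finset.sum_range_one, hFd]
    rfl
  have hd1 : dsum (f : MvPowerSeries (Fin 2) ℂ) 1 = coeffA f 0 1 + coeffA f 1 0 := by
    unfold dsum
    rw [Finset.sum_range_succ, Finset.sum_range_one, hFd, hFd]
    rfl
  have hd2 : dsum (f : MvPowerSeries (Fin 2) ℂ) 2
      = coeffA f 0 2 + coeffA f 1 1 + coeffA f 2 0 := by
    unfold dsum
    rw [Finset.sum_range_succ, Finset.sum_range_succ, Finset.sum_range_one, hFd, hFd, hFd]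
    rfl
  have hflex2 := flex_lemma (f : MvPowerSeries (Fin 2) ℂ)
    (by rw [hd0]; linear_combination -hb0)
    (by rw [hd1]; linear_combination -(1/2 : ℂ) * hb1) hflex
  rw [hd2] at hflex2
  refine ⟨by linear_combination -hb0, ?_, ?_⟩
  · linear_combination (-3/4 : ℂ)*hb1 + (1/2 : ℂ)*hb2 + 2*hflex2
  · linear_combination (1/4 : ℂ)*hb1 - (1/2 : ℂ)*hb2 - 2*hflex2
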